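/- Let Z be uniformly distributed on {−1,+1}^k (i.e., with independent Rademacher coordinates) and let Y be a random variable taking finitely many values jointly distributed with Z. Then for every i ∈ {1,…,k}, I(Z_i; Y) ≥ (1/(2 ln 2)) · E[ (E[Z_i | Y])² ], and consequently (1/k) Σ_{i=1}^k I(Z_i; Y) ≥ (1/(2 ln 2)) · (1 − mmse(Z|Y)/k). Here mutual information is measured in bits. -/

import Mathlib

open Finset

namespace Paper

/-- A probability distribution on a finite type, given by its mass function. -/
def IsDist {α : Type*} [Fintype α] (p : α → ℝ) : Prop :=
  (∀ a, 0 ≤ p a) ∧ ∑ a, p a = 1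

/-- A channel (row-stochastic kernel) from `α` to the finite alphabet `𝒴`. -/
def IsChannel {α 𝒴 : Type*} [Fintype α] [Fintype 𝒴] (W : α → 𝒴 → ℝ) : Prop :=
  ∀ x, IsDist (W x)

/-- Total variation distance between mass functions on a finite type. -/
noncomputable def tvDist {α : Type*} [Fintype α] (p q : α → ℝ) : ℝ :=
  (∑ a, |p a - q a|) / 2

/-- The element `2i-1` (1-indexed) of `[2k]`, i.e. index `2i` in 0-indexed terms. -/
def lo {k : ℕ} (i : Fin k) : Fin (2 * k) := ⟨2 * i.val, by have := i.isLt; omega⟩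

/-- The element `2i` (1-indexed) of `[2k]`, i.e. index `2i+1` in 0-indexed terms. -/
def hi {k : ℕ} (i : Fin k) : Fin (2 * k) := ⟨2 * i.val + 1, by have := i.isLt; omega⟩

/-- The channel information matrix `H(W)`  (division by `0` yields `0` in Lean,
matching the convention that terms with zero denominator vanish). -/
noncomputable def HMat (k : ℕ) {𝒴 : Type*} [Fintype 𝒴] (W : Fin (2 * k) → 𝒴 → ℝ) :
    Matrix (Fin k) (Fin k) ℝ := fun i j =>
  ∑ y, (W (lo i) y - W (hi i) y) * (W (lo j) y - W (hi j) y) / (∑ x, W x y)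

/-- Nuclear norm of a real symmetric matrix (sum of absolute values of eigenvalues). -/
noncomputable def nucNorm {k : ℕ} (A : Matrix (Fin k) (Fin k) ℝ) : ℝ :=
  if h : A.IsHermitian then ∑ i, |h.eigenvalues i| else 0

/-- Operator (spectral) norm of a real symmetric matrix. -/
noncomputable def opNorm {k : ℕ} (A : Matrix (Fin k) (Fin k) ℝ) : ℝ :=
  if h : A.IsHermitian then ⨆ i, |h.eigenvalues i| else 0

/-- Frobenius norm of a matrix. -/
noncomputable def frobNorm {k : ℕ} (A : Matrix (Fin k) (Fin k) ℝ) : ℝ :=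
  Real.sqrt (∑ i, ∑ j, (A i j) ^ 2)

/-- `‖𝒲‖_*`, the maximal nuclear norm of `H(W)` over the family. -/
noncomputable def famNuc (k : ℕ) {𝒴 : Type*} [Fintype 𝒴]
    (𝒲 : Set (Fin (2 * k) → 𝒴 → ℝ)) : ℝ :=
  sSup ((fun W => nucNorm (HMat k W)) '' 𝒲)

/-- `‖𝒲‖_op`, the maximal operator norm of `H(W)` over the family. -/
noncomputable def famOp (k : ℕ) {𝒴 : Type*} [Fintype 𝒴]
    (𝒲 : Set (Fin (2 * k) → 𝒴 → ℝ)) : ℝ :=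
  sSup ((fun W => opNorm (HMat k W)) '' 𝒲)

/-- `‖𝒲‖_F`, the maximal Frobenius norm of `H(W)` over the family. -/
noncomputable def famFrob (k : ℕ) {𝒴 : Type*} [Fintype 𝒴]
    (𝒲 : Set (Fin (2 * k) → 𝒴 → ℝ)) : ℝ :=
  sSup ((fun W => frobNorm (HMat k W)) '' 𝒲)

/-- A deterministic sequentially interactive protocol over `n` users: to each user `t`
and each message prefix it assigns a channel. -/
def Protocol (k n : ℕ) (𝒴 : Type*) : Type _ :=
  (t : Fin n) → (Fin t.val → 𝒴) → Fin (2 * k) → 𝒴 → ℝ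

/-- All channels used by the protocol belong to the family `𝒲`. -/
def UsesFamily {k n : ℕ} {𝒴 : Type*} (π : Protocol k n 𝒴)
    (𝒲 : Set (Fin (2 * k) → 𝒴 → ℝ)) : Prop :=
  ∀ t pre, π t pre ∈ 𝒲

/-- All kernels used by the protocol are genuine channels. -/
def ChannelProtocol {k n : ℕ} {𝒴 : Type*} [Fintype 𝒴] (π : Protocol k n 𝒴) : Prop :=
  ∀ t pre, IsChannel (π t pre)

/-- Distribution of the first `t` messages of the transcript when the inputs are
i.i.d. with law `p`. -/
noncomputable def prefixDist {k n : ℕ} {𝒴 : Type*} [Fintype 𝒴] (π : Protocol k n 𝒴)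
    (p : Fin (2 * k) → ℝ) (t : ℕ) (ht : t ≤ n) (y : Fin t → 𝒴) : ℝ :=
  ∏ s : Fin t, ∑ x, p x *
    π ⟨s.val, lt_of_lt_of_le s.isLt ht⟩ (fun r => y ⟨r.val, lt_trans r.isLt s.isLt⟩) x (y s)

/-- Distribution of the full transcript `Y^n` when the inputs are i.i.d. with law `p`. -/
noncomputable def transDist {k n : ℕ} {𝒴 : Type*} [Fintype 𝒴] (π : Protocol k n 𝒴)
    (p : Fin (2 * k) → ℝ) (y : Fin n → 𝒴) : ℝ :=
  prefixDist π p n le_rfl y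

/-- The uniform distribution on `[2k]`. -/
noncomputable def uniform2k (k : ℕ) : Fin (2 * k) → ℝ := fun _ => (2 * (k : ℝ))⁻¹

/-- An `(n, ε)`-estimator using `𝒲`: a public-coin sequentially interactive protocol
(seed distribution `μ`, protocols `π u`, channels from `𝒲`) together with an estimator
`est` such that, for every input distribution `p`, the probability that the estimate is
more than `ε` away from `p` in total variation is at most `1/100`. -/
def IsEstimator {k n : ℕ} {𝒴 𝒰 : Type*} [Fintype 𝒴] [Fintype 𝒰]
    (𝒲 : Set (Fin (2 * k) → 𝒴 → ℝ)) (μ : 𝒰 → ℝ) (π : 𝒰 → Protocol k n 𝒴)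
    (est : (Fin n → 𝒴) → 𝒰 → Fin (2 * k) → ℝ) (ε : ℝ) : Prop :=
  IsDist μ ∧ (∀ u, UsesFamily (π u) 𝒲) ∧ (∀ u, ChannelProtocol (π u)) ∧
  (∀ y u, IsDist (est y u)) ∧
  ∀ p : Fin (2 * k) → ℝ, IsDist p →
    (∑ u, ∑ y : Fin n → 𝒴, μ u * (transDist (π u) p y *
      (if ε < tvDist (est y u) p then (1 : ℝ) else 0))) ≤ 1 / 100

/-- An `(n, ε)`-uniformity test using `𝒲`: a public-coin sequentially interactive
protocol together with a randomized decision rule `T` (probability of output `1`)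
accepting uniform and rejecting `ε`-far distributions with probability `99/100`. -/
def IsUnifTest {k n : ℕ} {𝒴 𝒰 : Type*} [Fintype 𝒴] [Fintype 𝒰]
    (𝒲 : Set (Fin (2 * k) → 𝒴 → ℝ)) (μ : 𝒰 → ℝ) (π : 𝒰 → Protocol k n 𝒴)
    (T : (Fin n → 𝒴) → 𝒰 → ℝ) (ε : ℝ) : Prop :=
  IsDist μ ∧ (∀ u, UsesFamily (π u) 𝒲) ∧ (∀ u, ChannelProtocol (π u)) ∧
  (∀ y u, T y u ∈ Set.Icc (0 : ℝ) 1) ∧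
  (99 / 100 ≤ ∑ u, ∑ y : Fin n → 𝒴, μ u * (transDist (π u) (uniform2k k) y * (1 - T y u))) ∧
  ∀ p : Fin (2 * k) → ℝ, IsDist p → ε ≤ tvDist p (uniform2k k) →
    99 / 100 ≤ ∑ u, ∑ y : Fin n → 𝒴, μ u * (transDist (π u) p y * T y u)

/-- Mutual information (in nats) of a joint mass function on `A × B`. -/
noncomputable def miNats {A B : Type*} [Fintype A] [Fintype B] (j : A → B → ℝ) : ℝ :=
  ∑ a, ∑ b, j a b * Real.log (j a b / ((∑ b', j a b') * (∑ a', j a' b)))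

/-- Mutual information (in bits) of a joint mass function on `A × B`. -/
noncomputable def miBits {A B : Type*} [Fintype A] [Fintype B] (j : A → B → ℝ) : ℝ :=
  ∑ a, ∑ b, j a b * Real.logb 2 (j a b / ((∑ b', j a b') * (∑ a', j a' b)))

/-- Binary entropy function (in bits). -/
noncomputable def binEnt (t : ℝ) : ℝ :=
  -(t * Real.logb 2 t) - (1 - t) * Real.logb 2 (1 - t)

/-- `±1` encoding of a Boolean. -/
def pm (b : Bool) : ℝ := if b then 1 else -1

/-- The joint mass function of `(Z_i, Y)` obtained from a joint mass function of `(Z, Y)`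
for `Z ∈ {−1,+1}^k` (encoded via Booleans). -/
noncomputable def coordJoint {k : ℕ} {𝒴 : Type*} [Fintype 𝒴]
    (j : (Fin k → Bool) → 𝒴 → ℝ) (i : Fin k) : Bool → 𝒴 → ℝ :=
  fun b y => ∑ z : Fin k → Bool, if z i = b then j z y else 0

/-- The Paninski perturbation `p_z` of the uniform distribution on `[2k]`:
`p_z(2i−1) = (1+2ε z_i)/(2k)` and `p_z(2i) = (1−2ε z_i)/(2k)` (1-indexed). -/
noncomputable def paninski (k : ℕ) (ε : ℝ) (z : Fin k → Bool) : Fin (2 * k) → ℝ :=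
  fun x => (1 + (if x.val % 2 = 0 then (1 : ℝ) else -1) * (2 * ε) *
    pm (z ⟨x.val / 2, by have := x.isLt; omega⟩)) / (2 * k)

/-- Chi-square divergence between mass functions on a finite type. -/
noncomputable def chiSq {α : Type*} [Fintype α] (P Q : α → ℝ) : ℝ :=
  ∑ y, (P y - Q y) ^ 2 / Q y

/-- Kullback–Leibler divergence (in nats) between mass functions on a finite type. -/
noncomputable def klDivNats {α : Type*} [Fintype α] (P Q : α → ℝ) : ℝ :=
  ∑ y, P y * Real.log (P y / Q y)

/-- The leaky-query channel `W_u^η` on output alphabet `[2k] ∪ {1*, 0*}`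
(`Sum.inr true = 1*`, `Sum.inr false = 0*`). -/
noncomputable def leaky (k : ℕ) (η : ℝ) (u : Fin (2 * k) → ℝ) :
    Fin (2 * k) → (Fin (2 * k) ⊕ Bool) → ℝ :=
  fun x y => Sum.elim (fun x' => if x' = x then η else 0)
    (fun b => if b then (1 - η) * u x else (1 - η) * (1 - u x)) y

/-- The vector `δ(u)` associated with a leaky-query channel. -/
noncomputable def leakyDelta (k : ℕ) (u : Fin (2 * k) → ℝ) : Fin k → ℝ :=
  fun i => (u (lo i) - u (hi i)) *
    Real.sqrt ((2 * (k : ℝ)) / ((∑ x, u x) * (2 * (k : ℝ) - ∑ x, u x)))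

/-- The partial-erasure channel `W_{x*}` on output alphabet `[2k] ∪ {⊥}`. -/
noncomputable def eraseCh (k : ℕ) (η : ℝ) (xs : Fin (2 * k)) :
    Fin (2 * k) → (Fin (2 * k) ⊕ Unit) → ℝ :=
  fun x y => Sum.elim (fun x' => if x' = x then (if x = xs then 1 else η) else 0)
    (fun _ => if x = xs then 0 else 1 - η) y

/-- The family of all `ρ`-locally differentially private channels from `[2k]` to `𝒴`. -/
def ldpFamily (k : ℕ) {𝒴 : Type*} [Fintype 𝒴] (ρ : ℝ) :
    Set (Fin (2 * k) → 𝒴 → ℝ) :=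
  { W | IsChannel W ∧ ∀ x x' y, W x y ≤ Real.exp ρ * W x' y }

/-- Information vs. mean squared loss: if `Z` is uniform on
`{−1,+1}^k` and `Y` is a finitely-valued observation (joint mass function `j`), then
`I(Z_i; Y) ≥ (1/(2 ln 2)) E[(E[Z_i|Y])²]` for each `i`, and on average
`(1/k) Σᵢ I(Z_i; Y) ≥ (1/(2 ln 2)) (1 − mmse(Z|Y)/k)`, where the minimum mean squared
error is the infimum over estimators `g` of `E[‖Z − g(Y)‖₂²]`. Information is in bits. -/
private lemma aux_G_nonneg {x : ℝ} (hx : x ∈ Set.Ioo (1/2 : ℝ) 1) :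
    0 ≤ Real.log x - Real.log (1 - x) - 4 * x + 2 := by
  set G : ℝ → ℝ := fun a => Real.log a - Real.log (1 - a) - 4 * a + 2 with hG
  have hmono : MonotoneOn G (Set.Ico (1/2 : ℝ) 1) := by
    apply monotoneOn_of_deriv_nonneg (convex_Ico _ _)
    · intro a ha
      rcases ha with ⟨h1, h2⟩
      have ha0 : (0:ℝ) < a := by linarith
      have ha1 : (0:ℝ) < 1 - a := by linarith
      apply ContinuousAt.continuousWithinAt
      have c2 : ContinuousAt (fun a : ℝ => Real.log (1 - a)) a :=
        (Real.continuousAt_log ha1.ne').comp (by fun_prop)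
      exact (((Real.continuousAt_log ha0.ne').sub c2).sub (by fun_prop)).add continuousAt_const
    · rw [interior_Ico]
      intro a ha
      rcases ha with ⟨h1, h2⟩
      have ha0 : (0:ℝ) < a := by linarith
      have ha1 : (0:ℝ) < 1 - a := by linarith
      apply DifferentiableAt.differentiableWithinAt
      apply DifferentiableAt.add
      apply DifferentiableAt.sub
      apply DifferentiableAt.sub
      · exact Real.differentiableAt_log ha0.ne'
      · exact (Real.differentiableAt_log ha1.ne').comp a (by fun_prop)
      · fun_prop
      · fun_prop
    · rw [interior_Ico]
      intro a ha
      rcases ha with ⟨h1, h2⟩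
      have ha0 : (0:ℝ) < a := by linarith
      have ha1 : (0:ℝ) < 1 - a := by linarith
      have hd : HasDerivAt G (1/a - (-1)/(1-a) - 4) a := by
        have d1 : HasDerivAt Real.log (1/a) a := by
          simpa [one_div] using Real.hasDerivAt_log ha0.ne'
        have d2 : HasDerivAt (fun a : ℝ => Real.log (1 - a)) ((-1)/(1-a)) a := by
          have := (Real.hasDerivAt_log ha1.ne').comp a
            ((hasDerivAt_id a).const_sub 1)
          simpa [div_eq_inv_mul, Function.comp_def] using this
        have d3 : HasDerivAt (fun a : ℝ => 4 * a) 4 a := by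
          simpa using (hasDerivAt_id a).const_mul (4:ℝ)
        exact ((d1.sub d2).sub d3).add_const 2
      rw [hd.deriv]
      have key : (4:ℝ) ≤ 1/a - (-1)/(1-a) := by
        rw [div_sub_div _ _ ha0.ne' ha1.ne', le_div_iff₀ (by positivity)]
        nlinarith [sq_nonneg (2*a - 1)]
      linarith
  have h0 : G (1/2) = 0 := by
    simp only [hG]
    rw [show (1:ℝ) - 1/2 = 1/2 by norm_num, one_div, Real.log_inv]
    ring
  have := hmono (Set.mem_Ico.mpr ⟨le_rfl, by norm_num⟩)
    (Set.mem_Ico.mpr ⟨hx.1.le, hx.2⟩) hx.1.le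
  rw [h0] at this
  exact this

private lemma aux_F_nonneg_half (a : ℝ) (h0 : 1/2 ≤ a) (h1 : a ≤ 1) :
    0 ≤ Real.log 2 + a * Real.log a + (1 - a) * Real.log (1 - a) - (2*a - 1)^2 / 2 := by
  set F : ℝ → ℝ := fun a => Real.log 2 + a * Real.log a + (1 - a) * Real.log (1 - a)
      - (2*a - 1)^2 / 2 with hF
  have hmono : MonotoneOn F (Set.Icc (1/2 : ℝ) 1) := by
    apply monotoneOn_of_deriv_nonneg (convex_Icc _ _)
    · apply Continuous.continuousOn
      have c1 : Continuous fun a : ℝ => a * Real.log a := Real.continuous_mul_log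
      have c2 : Continuous fun a : ℝ => (1 - a) * Real.log (1 - a) :=
        Real.continuous_mul_log.comp (by continuity)
      continuity
    · rw [interior_Icc]
      intro a ha
      rcases ha with ⟨hl, hr⟩
      have ha0 : a ≠ 0 := by intro h; rw [h] at hl; norm_num at hl
      have ha1 : (1:ℝ) - a ≠ 0 := by intro h; nlinarith
      apply DifferentiableAt.differentiableWithinAt
      apply DifferentiableAt.sub
      apply DifferentiableAt.add
      apply DifferentiableAt.add (differentiableAt_const _)
      · exact (Real.hasDerivAt_mul_log ha0).differentiableAt
      · exact ((Real.hasDerivAt_mul_log ha1).differentiableAt).comp a (by fun_prop)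
      · fun_prop
    · rw [interior_Icc]
      intro a ha
      rcases ha with ⟨hl, hr⟩
      have ha0 : a ≠ 0 := by intro h; rw [h] at hl; norm_num at hl
      have ha1 : (1:ℝ) - a ≠ 0 := by intro h; nlinarith
      have d1 : HasDerivAt (fun a : ℝ => a * Real.log a) (Real.log a + 1) a :=
        Real.hasDerivAt_mul_log ha0
      have d2 : HasDerivAt (fun a : ℝ => (1 - a) * Real.log (1 - a))
          ((Real.log (1-a) + 1) * (-1)) a :=
        (Real.hasDerivAt_mul_log ha1).comp a (by simpa using (hasDerivAt_id a).const_sub 1)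
      have d3 : HasDerivAt (fun a : ℝ => (2*a - 1)^2 / 2) (2*(2*a-1)*2/2) a := by
        have hb : HasDerivAt (fun a : ℝ => (2*a - 1)) 2 a := by
          simpa using ((hasDerivAt_id a).const_mul (2:ℝ)).sub_const 1
        have := (hb.pow 2).div_const 2
        norm_num at this
        exact this.congr_deriv (by ring)
      have hd : HasDerivAt F ((Real.log a + 1) + (Real.log (1-a) + 1) * (-1) - 2*(2*a-1)*2/2) a :=
        ((d1.const_add (Real.log 2)).add d2).sub d3
      rw [hd.deriv]
      have := aux_G_nonneg (x := a) ⟨hl, hr⟩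
      linarith
  have hval : F (1/2) = 0 := by
    simp only [hF]
    rw [show (1:ℝ) - 1/2 = 1/2 by norm_num, one_div, Real.log_inv]
    ring
  have := hmono (Set.mem_Icc.mpr ⟨le_rfl, by norm_num⟩) (Set.mem_Icc.mpr ⟨h0, h1⟩) h0
  rw [hval] at this
  exact this

private lemma aux_F_nonneg (a : ℝ) (h0 : 0 ≤ a) (h1 : a ≤ 1) :
    0 ≤ Real.log 2 + a * Real.log a + (1 - a) * Real.log (1 - a) - (2*a - 1)^2 / 2 := by
  rcases le_total (1/2 : ℝ) a with h | h
  · exact aux_F_nonneg_half a h h1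
  · have := aux_F_nonneg_half (1 - a) (by linarith) (by linarith)
    have e : (1:ℝ) - (1 - a) = a := by ring
    rw [e] at this
    nlinarith [this]

private lemma aux_mul_log_two (x : ℝ) (hx : 0 ≤ x) :
    x * Real.log (2 * x) = x * Real.log 2 + x * Real.log x := by
  rcases eq_or_lt_of_le hx with h | h
  · simp [← h]
  · rw [Real.log_mul two_ne_zero h.ne']
    ring

private lemma aux_base (a : ℝ) (h0 : 0 ≤ a) (h1 : a ≤ 1) :
    (2*a - 1)^2 / 2 ≤ a * Real.log (2*a) + (1 - a) * Real.log (2*(1-a)) := by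
  have e1 := aux_mul_log_two a h0
  have e2 := aux_mul_log_two (1 - a) (by linarith)
  have := aux_F_nonneg a h0 h1
  rw [e1, e2]
  nlinarith [this]

private lemma aux_pq (p q : ℝ) (hp : 0 ≤ p) (hq : 0 ≤ q) :
    (p - q)^2 / (p + q) / 2 ≤ p * Real.log (2*p/(p+q)) + q * Real.log (2*q/(p+q)) := by
  rcases eq_or_lt_of_le (by linarith : (0:ℝ) ≤ p + q) with hs | hs
  · have hp0 : p = 0 := by linarith
    have hq0 : q = 0 := by linarith
    simp [hp0, hq0]
  · have ha0 : 0 ≤ p / (p + q) := by positivity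
    have ha1 : p / (p + q) ≤ 1 := by
      rw [div_le_one hs]; linarith
    have key := aux_base (p / (p + q)) ha0 ha1
    have h1a : 1 - p / (p+q) = q / (p+q) := by field_simp; ring
    rw [h1a, mul_div_assoc' 2 p (p+q), mul_div_assoc' 2 q (p+q)] at key
    have hmul := mul_le_mul_of_nonneg_left key hs.le
    calc (p - q)^2 / (p + q) / 2
        = (p+q) * ((2 * p / (p+q) - 1)^2 / 2) := by
          field_simp
          ring
      _ ≤ (p+q) * (p/(p+q) * Real.log (2*p/(p+q)) + q/(p+q) * Real.log (2*q/(p+q))) := hmul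
      _ = p * Real.log (2*p/(p+q)) + q * Real.log (2*q/(p+q)) := by field_simp

private lemma aux_sum_coord {k : ℕ} (i : Fin k) (F : Bool → ℝ) :
    ∑ z : Fin k → Bool, F (z i) = 2^(k-1) * (F false + F true) := by
  classical
  rw [Fintype.sum_equiv (Equiv.piSplitAt i (fun _ : Fin k => Bool))
    (fun z => F (z i)) (fun p => F p.1) (fun z => rfl)]
  rw [Fintype.sum_prod_type]
  simp only [Finset.sum_const, Finset.card_univ, nsmul_eq_mul]
  have hcard : Fintype.card ({j : Fin k // j ≠ i} → Bool) = 2^(k-1) := by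
    rw [Fintype.card_fun]
    have : Fintype.card {j : Fin k // j ≠ i} = k - 1 := by
      simp only [ne_eq]
      rw [Fintype.card_subtype_compl, Fintype.card_subtype_eq, Fintype.card_fin]
    rw [this, Fintype.card_bool]
  rw [hcard, Fintype.sum_bool]
  push_cast
  ring

theorem information_mse_loss
    (k : ℕ) (hk : 1 ≤ k) (𝒴 : Type) [Fintype 𝒴]
    (j : (Fin k → Bool) → 𝒴 → ℝ)
    (hj : ∀ z y, 0 ≤ j z y)
    (hmarg : ∀ z, ∑ y, j z y = (1 / 2 : ℝ) ^ k) :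
    (∀ i : Fin k,
      (1 / (2 * Real.log 2)) *
        ∑ y, (∑ z, j z y) * ((∑ z, pm (z i) * j z y) / (∑ z, j z y)) ^ 2 ≤
        miBits (coordJoint j i)) ∧
    (1 / (2 * Real.log 2)) *
        (1 - (⨅ g : 𝒴 → Fin k → ℝ,
          ∑ z, ∑ y, j z y * ∑ i : Fin k, (pm (z i) - g y i) ^ 2) / (k : ℝ)) ≤
      (1 / (k : ℝ)) * ∑ i : Fin k, miBits (coordJoint j i) := by
  classical
  have hlog2 : 0 < Real.log 2 := Real.log_pos one_lt_two
  have hpow : (2:ℝ)^(k-1) * (1/2)^k = 1/2 := by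
    obtain ⟨m, rfl⟩ : ∃ m, k = m + 1 := ⟨k-1, by omega⟩
    simp only [Nat.add_sub_cancel, pow_succ]
    rw [← mul_assoc, ← mul_pow]
    norm_num
  have hPnn : ∀ y, 0 ≤ ∑ z, j z y := fun y => Finset.sum_nonneg (fun z _ => hj z y)
  have hqnn : ∀ (i : Fin k) (b : Bool) (y : 𝒴), 0 ≤ coordJoint j i b y := by
    intro i b y
    apply Finset.sum_nonneg
    intro z _
    by_cases h : z i = b <;> simp [h, hj z y]
  have hmarg2 : ∀ (i : Fin k) (b : Bool), ∑ y, coordJoint j i b y = 1/2 := by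
    intro i b
    unfold coordJoint
    rw [Finset.sum_comm]
    calc ∑ z : Fin k → Bool, ∑ y, (if z i = b then j z y else 0)
        = ∑ z : Fin k → Bool, (if z i = b then (1/2:ℝ)^k else 0) := by
          apply Finset.sum_congr rfl
          intro z _
          by_cases h : z i = b <;> simp [h, hmarg z]
      _ = 2^(k-1) * ((if false = b then (1/2:ℝ)^k else 0) +
            (if true = b then (1/2:ℝ)^k else 0)) :=
          aux_sum_coord i (fun c => if c = b then (1/2:ℝ)^k else 0)
      _ = 1/2 := by cases b <;> simpa [one_div, inv_pow] using hpow
  have hcol : ∀ (i : Fin k) (y : 𝒴),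
      coordJoint j i false y + coordJoint j i true y = ∑ z, j z y := by
    intro i y
    unfold coordJoint
    rw [← Finset.sum_add_distrib]
    apply Finset.sum_congr rfl
    intro z _
    cases h : z i <;> simp [h]
  have hm : ∀ (i : Fin k) (y : 𝒴),
      ∑ z, pm (z i) * j z y = coordJoint j i true y - coordJoint j i false y := by
    intro i y
    unfold coordJoint
    rw [← Finset.sum_sub_distrib]
    apply Finset.sum_congr rfl
    intro z _
    cases h : z i <;> simp [h, pm]
  have hpart1 : ∀ i : Fin k,
      (1 / (2 * Real.log 2)) *
        ∑ y, (∑ z, j z y) * ((∑ z, pm (z i) * j z y) / (∑ z, j z y)) ^ 2 ≤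
        miBits (coordJoint j i) := by
    intro i
    have hmi : miBits (coordJoint j i) =
        ∑ y, ((coordJoint j i false y) *
            Real.logb 2 (coordJoint j i false y / ((1/2) * (∑ z, j z y))) +
          (coordJoint j i true y) *
            Real.logb 2 (coordJoint j i true y / ((1/2) * (∑ z, j z y)))) := by
      unfold miBits
      rw [Fintype.sum_bool, ← Finset.sum_add_distrib]
      apply Finset.sum_congr rfl
      intro y _
      rw [hmarg2 i true, hmarg2 i false, Fintype.sum_bool]
      have hct : coordJoint j i true y + coordJoint j i false y = ∑ z, j z y := by
        rw [add_comm]; exact hcol i y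
      rw [hct]
      ring
    rw [hmi, Finset.mul_sum]
    apply Finset.sum_le_sum
    intro y _
    have hqf := hqnn i false y
    have hqt := hqnn i true y
    rw [← hcol i y, hm i y]
    set qf := coordJoint j i false y with hqfd
    set qt := coordJoint j i true y with hqtd
    have hdiv : ∀ a b : ℝ, a / ((1/2) * b) = 2 * a / b := by
      intro a b
      rw [show (1/2:ℝ)*b = b/2 by ring, div_div_eq_mul_div, mul_comm]
    rw [hdiv, hdiv]
    have hsq : (qf+qt) * ((qt-qf)/(qf+qt))^2 = (qt-qf)^2/(qf+qt) := by
      rcases eq_or_ne (qf+qt) 0 with h | h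
      · rw [h]; simp
      · field_simp
    rw [hsq]
    have hnat := aux_pq qf qt hqf hqt
    have hsq2 : (qf-qt)^2 = (qt-qf)^2 := by ring
    rw [hsq2] at hnat
    rw [← Real.log_div_log, ← Real.log_div_log]
    calc (1/(2*Real.log 2)) * ((qt-qf)^2/(qf+qt))
        = ((qt-qf)^2/(qf+qt)/2)/Real.log 2 := by ring
      _ ≤ (qf * Real.log (2*qf/(qf+qt)) + qt * Real.log (2*qt/(qf+qt)))/Real.log 2 := by
          gcongr
      _ = qf * (Real.log (2*qf/(qf+qt)) / Real.log 2) +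
          qt * (Real.log (2*qt/(qf+qt)) / Real.log 2) := by ring
  refine ⟨hpart1, ?_⟩
  have hk0 : (0:ℝ) < k := by
    have : 0 < k := by omega
    exact_mod_cast this
  set S : ℝ := ∑ i : Fin k, ∑ y,
      (∑ z, j z y) * ((∑ z, pm (z i) * j z y) / (∑ z, j z y)) ^ 2 with hSdef
  have hPsum : ∑ y, ∑ z, j z y = 1 := by
    rw [Finset.sum_comm]
    rw [Finset.sum_congr rfl (fun z _ => hmarg z)]
    rw [Finset.sum_const, Finset.card_univ]
    rw [show Fintype.card (Fin k → Bool) = 2^k by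
      rw [Fintype.card_fun, Fintype.card_bool, Fintype.card_fin]]
    rw [nsmul_eq_mul]
    push_cast
    rw [← mul_pow]
    norm_num
  have hPMs : ∀ (i : Fin k) (y : 𝒴),
      (∑ z, pm (z i) * j z y)^2/(∑ z, j z y) =
      (∑ z, j z y) * ((∑ z, pm (z i) * j z y)/(∑ z, j z y))^2 := by
    intro i y
    rcases eq_or_ne (∑ z, j z y) 0 with h | h
    · rw [h]; simp
    · field_simp
  have hinf : (k:ℝ) - S ≤ ⨅ g : 𝒴 → Fin k → ℝ,
      ∑ z, ∑ y, j z y * ∑ i : Fin k, (pm (z i) - g y i) ^ 2 := by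
    apply le_ciInf
    intro g
    have hiy : ∀ (i : Fin k) (y : 𝒴),
        (∑ z, j z y) - (∑ z, pm (z i) * j z y)^2/(∑ z, j z y) ≤
        ∑ z, j z y * (pm (z i) - g y i)^2 := by
      intro i y
      have hexp : ∑ z, j z y * (pm (z i) - g y i)^2 =
          (∑ z, j z y) - 2*g y i*(∑ z, pm (z i) * j z y) + g y i^2 * (∑ z, j z y) := by
        have hz : ∀ z : Fin k → Bool, j z y * (pm (z i) - g y i)^2 =
            j z y - 2*g y i*(pm (z i)*j z y) + g y i^2 * j z y := by
          intro z
          have hpm2 : pm (z i)^2 = 1 := by cases z i <;> norm_num [pm]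
          linear_combination (j z y) * hpm2
        rw [Finset.sum_congr rfl (fun z _ => hz z)]
        rw [Finset.sum_add_distrib, Finset.sum_sub_distrib, ← Finset.mul_sum, ← Finset.mul_sum]
      rw [hexp]
      rcases eq_or_lt_of_le (hPnn y) with h | h
      · have hj0 : ∀ z ∈ Finset.univ, j z y = 0 :=
          (Finset.sum_eq_zero_iff_of_nonneg (fun z _ => hj z y)).mp h.symm
        have hM0 : ∑ z, pm (z i) * j z y = 0 :=
          Finset.sum_eq_zero (fun z hzu => by rw [hj0 z hzu]; ring)
        rw [hM0, ← h]
        simp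
      · have hexpand : ((∑ z, pm (z i) * j z y) - g y i*(∑ z, j z y))^2/(∑ z, j z y) =
            (∑ z, pm (z i) * j z y)^2/(∑ z, j z y) -
              2*g y i*(∑ z, pm (z i) * j z y) + g y i^2 * (∑ z, j z y) := by
          field_simp
          ring
        have hnn : 0 ≤ ((∑ z, pm (z i) * j z y) - g y i*(∑ z, j z y))^2/(∑ z, j z y) := by
          positivity
        linarith [hexpand ▸ hnn]
    calc (k:ℝ) - S
        = ∑ i : Fin k, ∑ y,
            ((∑ z, j z y) - (∑ z, pm (z i) * j z y)^2/(∑ z, j z y)) := by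
          have hterm : ∀ i : Fin k, ∑ y,
              ((∑ z, j z y) - (∑ z, pm (z i) * j z y)^2/(∑ z, j z y)) =
              1 - ∑ y, (∑ z, j z y) * ((∑ z, pm (z i) * j z y)/(∑ z, j z y))^2 := by
            intro i
            rw [Finset.sum_sub_distrib, hPsum]
            congr 1
            exact Finset.sum_congr rfl (fun y _ => hPMs i y)
          rw [Finset.sum_congr rfl (fun i _ => hterm i), Finset.sum_sub_distrib,
            Finset.sum_const, Finset.card_univ, Fintype.card_fin, nsmul_eq_mul, mul_one,
            hSdef]
      _ ≤ ∑ i : Fin k, ∑ y, ∑ z, j z y * (pm (z i) - g y i)^2 :=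
          Finset.sum_le_sum (fun i _ => Finset.sum_le_sum (fun y _ => hiy i y))
      _ = ∑ z : Fin k → Bool, ∑ y, ∑ i : Fin k, j z y * (pm (z i) - g y i)^2 := by
          calc ∑ i : Fin k, ∑ y, ∑ z : Fin k → Bool, j z y * (pm (z i) - g y i)^2
              = ∑ i : Fin k, ∑ z : Fin k → Bool, ∑ y, j z y * (pm (z i) - g y i)^2 :=
                Finset.sum_congr rfl (fun i _ => Finset.sum_comm ..)
            _ = ∑ z : Fin k → Bool, ∑ i : Fin k, ∑ y, j z y * (pm (z i) - g y i)^2 :=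
                Finset.sum_comm ..
            _ = ∑ z : Fin k → Bool, ∑ y, ∑ i : Fin k, j z y * (pm (z i) - g y i)^2 :=
                Finset.sum_congr rfl (fun z _ => Finset.sum_comm ..)
      _ = ∑ z, ∑ y, j z y * ∑ i : Fin k, (pm (z i) - g y i) ^ 2 := by
          apply Finset.sum_congr rfl
          intro z _
          apply Finset.sum_congr rfl
          intro y _
          rw [Finset.mul_sum]
  have hS_le : (1/(2*Real.log 2)) * S ≤ ∑ i, miBits (coordJoint j i) := by
    rw [hSdef, Finset.mul_sum]
    exact Finset.sum_le_sum (fun i _ => hpart1 i)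
  set I : ℝ := ⨅ g : 𝒴 → Fin k → ℝ,
      ∑ z, ∑ y, j z y * ∑ i : Fin k, (pm (z i) - g y i) ^ 2 with hIdef
  have h1' : 1 - I/k ≤ S/k := by
    have h2 : ((k:ℝ) - S)/k ≤ I/k := by gcongr
    have h3 : ((k:ℝ) - S)/k = 1 - S/k := by field_simp
    linarith
  have hc : (0:ℝ) ≤ 1/(2*Real.log 2) := by positivity
  calc (1/(2*Real.log 2)) * (1 - I/k)
      ≤ (1/(2*Real.log 2)) * (S/k) := mul_le_mul_of_nonneg_left h1' hc
    _ = (1/(k:ℝ)) * ((1/(2*Real.log 2)) * S) := by ring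
    _ ≤ (1/(k:ℝ)) * ∑ i, miBits (coordJoint j i) :=
        mul_le_mul_of_nonneg_left hS_le (by positivity)

end Paper
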